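/- For all integers m \ge 0 and n \ge 1, S_{2m+1,n}(q) = \sum_{k=0}^{m} (-1)^{m-k} \frac{[k]!}{[m+1]!} P_{m,m-k}(q) \, q^{(m-k)n} \frac{([n][n+1])^{k+1}}{[2]} in \mathbb{Q}(q), where P_{m,j} = \det( h_{m-j-i+2l-1}(\{1,q\}^{i-l+2}) )_{i,l \in \{0,\dots,j-1\}}. -/

import Mathlib

open Finset

/-- The `q`-integer `[n] = (1-q^n)/(1-q)` in `ℚ(q)`. -/
noncomputable def qint (n : ℕ) : RatFunc ℚ :=
  (1 - RatFunc.X ^ n) / (1 - RatFunc.X)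

/-- The `q`-factorial `[m]! = ∏_{i=1}^m [i]`. -/
noncomputable def qfact (m : ℕ) : RatFunc ℚ := ∏ i ∈ Icc 1 m, qint i

/-- `h_j({1,q}^r)`: the complete homogeneous symmetric polynomial of degree `j` in `2r`
variables, `r` specialized to `q` and `r` to `1`; it vanishes for `j < 0`, or for `r ≤ 0`
with `j > 0`, and `h_0 = 1`. -/
noncomputable def hgen (j r : ℤ) : RatFunc ℚ :=
  if 0 ≤ j ∧ 0 < r then
    ∑ i ∈ range (j.toNat + 1),
      (((r - 1).toNat + i).choose (r - 1).toNat : RatFunc ℚ) *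
        ((j.toNat + (r - 1).toNat - i).choose (r - 1).toNat : RatFunc ℚ) * RatFunc.X ^ i
  else if j = 0 then 1 else 0

/-- The `q`-Faulhaber polynomial
`P_{m,k} = det( h_{m-k-i+2j-1}({1,q}^{i-j+2}) )_{i,j ∈ {0,…,k-1}}`. -/
noncomputable def P (m k : ℕ) : RatFunc ℚ :=
  Matrix.det (Matrix.of fun i j : Fin k =>
    hgen ((m : ℤ) - k - i + 2 * j - 1) ((i : ℤ) - j + 2))

/-- `S_{m,n}(q) = ∑_{k=1}^n ([2k]/[2]) [k]^{m-1} q^{((m+1)/2)(n-k)}`. -/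
noncomputable def S (m n : ℕ) : RatFunc ℚ :=
  ∑ k ∈ Icc 1 n, (qint (2 * k) / qint 2) * qint k ^ (m - 1) *
    RatFunc.X ^ ((m + 1) / 2 * (n - k))

lemma one_sub_X_pow_ne {n : ℕ} (hn : 1 ≤ n) : (1 - RatFunc.X ^ n : RatFunc ℚ) ≠ 0 := by
  rw [sub_ne_zero]
  intro h
  have h2 : (algebraMap (Polynomial ℚ) (RatFunc ℚ)) 1 = algebraMap (Polynomial ℚ) (RatFunc ℚ) (Polynomial.X ^ n) := by
    rw [map_one, map_pow, RatFunc.algebraMap_X]; exact h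
  have := RatFunc.algebraMap_injective ℚ h2
  have := congrArg Polynomial.natDegree this
  simp [Polynomial.natDegree_X_pow] at this
  omega

lemma one_sub_X_ne : (1 - RatFunc.X : RatFunc ℚ) ≠ 0 := by
  simpa using one_sub_X_pow_ne (le_refl 1)

lemma qint_mul (n : ℕ) : qint n * (1 - RatFunc.X) = 1 - RatFunc.X ^ n := by
  rw [qint, div_mul_cancel₀ _ one_sub_X_ne]

lemma qint_ne_zero {n : ℕ} (hn : 1 ≤ n) : qint n ≠ 0 :=
  div_ne_zero (one_sub_X_pow_ne hn) one_sub_X_ne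

lemma qint_geom (n : ℕ) : qint n = ∑ i ∈ range n, RatFunc.X ^ i := by
  have h := geom_sum_mul (RatFunc.X : RatFunc ℚ) n
  have h2 : (∑ i ∈ range n, (RatFunc.X : RatFunc ℚ) ^ i) * (1 - RatFunc.X) = 1 - RatFunc.X ^ n := by
    have : (∑ i ∈ range n, (RatFunc.X:RatFunc ℚ) ^ i) * (1 - RatFunc.X)
        = -((∑ i ∈ range n, (RatFunc.X:RatFunc ℚ) ^ i) * (RatFunc.X - 1)) := by ring
    rw [this, h]; ring
  rw [qint, eq_comm, eq_div_iff one_sub_X_ne, h2]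

lemma qfact_zero : qfact 0 = 1 := by simp [qfact]

lemma qfact_succ (m : ℕ) : qfact (m + 1) = qfact m * qint (m + 1) := by
  rw [qfact, qfact, Finset.prod_Icc_succ_top (by omega)]

lemma qfact_ne_zero (m : ℕ) : qfact m ≠ 0 := by
  rw [qfact]
  refine Finset.prod_ne_zero_iff.2 fun i hi => qint_ne_zero ?_
  exact (Finset.mem_Icc.1 hi).1


lemma hgen_neg {j : ℤ} (hj : j < 0) (r : ℤ) : hgen j r = 0 := by
  rw [hgen, if_neg (by omega), if_neg (by omega)]

lemma hgen_r_nonpos {j r : ℤ} (hj : j ≠ 0) (hr : r ≤ 0) : hgen j r = 0 := by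
  rw [hgen, if_neg (by omega), if_neg hj]

lemma hgen_zero (r : ℤ) : hgen 0 r = 1 := by
  rw [hgen]
  by_cases hr : 0 < r
  · rw [if_pos ⟨le_refl 0, hr⟩]
    simp
  · rw [if_neg (by omega), if_pos rfl]

lemma hgen_nat (d s : ℕ) : hgen d ((s : ℤ) + 1) =
    ∑ i ∈ range (d + 1),
      ((s + i).choose s : RatFunc ℚ) * ((s + d - i).choose s : RatFunc ℚ) * RatFunc.X ^ i := by
  rw [hgen, if_pos ⟨Int.ofNat_nonneg d, by omega⟩]
  have h1 : ((s : ℤ) + 1 - 1).toNat = s := by omega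
  have h2 : (d : ℤ).toNat = d := by omega
  rw [h1, h2]
  refine Finset.sum_congr rfl fun i hi => ?_
  have : d + s - i = s + d - i := by omega
  rw [this, Nat.add_comm s i]

lemma hgen_one (n : ℕ) : hgen n 1 = ∑ i ∈ range (n + 1), (RatFunc.X : RatFunc ℚ) ^ i := by
  have := hgen_nat n 0
  simp only [Nat.cast_zero, zero_add, Nat.choose_zero_right, Nat.cast_one, one_mul] at this ⊢
  rw [this]

lemma pascal_key (σ a b : ℕ) :
    (σ+a+1).choose (σ+1) * ((σ+b+1).choose (σ+1)) + (σ+a).choose (σ+1) * ((σ+b).choose (σ+1))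
    = (σ+a+1).choose (σ+1) * ((σ+b).choose (σ+1)) + (σ+a).choose (σ+1) * ((σ+b+1).choose (σ+1))
      + (σ+a).choose σ * ((σ+b).choose σ) := by
  rw [Nat.choose_succ_succ' (σ+a) σ, Nat.choose_succ_succ' (σ+b) σ]
  ring

lemma hgen_pred (e s : ℕ) : hgen ((e : ℤ) - 1) ((s : ℤ) + 1) =
    ∑ i ∈ range e,
      ((s + i).choose s : RatFunc ℚ) * ((s + e - 1 - i).choose s : RatFunc ℚ) * RatFunc.X ^ i := by
  cases e with
  | zero => rw [show ((0:ℕ) : ℤ) - 1 = (-1 : ℤ) by ring, hgen_neg (by omega)]; simp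
  | succ u =>
    have h : ((u+1 : ℕ) : ℤ) - 1 = ((u : ℕ) : ℤ) := by push_cast; ring
    rw [h, hgen_nat u s]
    refine Finset.sum_congr rfl fun i hi => ?_
    have : s + (u+1) - 1 - i = s + u - i := by omega
    rw [this]

lemma geom_step (u : ℕ) :
    ∑ i ∈ range (u+3), (RatFunc.X : RatFunc ℚ) ^ i
    = (1 + RatFunc.X) * ∑ i ∈ range (u+2), (RatFunc.X : RatFunc ℚ) ^ i
      - RatFunc.X * ∑ i ∈ range (u+1), (RatFunc.X : RatFunc ℚ) ^ i := by
  simp only [Finset.sum_range_succ]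
  ring

-- the key recurrence
lemma hrec (d : ℤ) (s : ℕ) :
    hgen d ((s : ℤ) + 1) = (1 + RatFunc.X) * hgen (d - 1) ((s : ℤ) + 1)
      - RatFunc.X * hgen (d - 2) ((s : ℤ) + 1) + hgen d s := by
  rcases lt_trichotomy d 0 with hd | hd | hd
  · rw [hgen_neg hd, hgen_neg (by omega), hgen_neg (by omega), hgen_neg hd]
    ring
  · subst hd
    rw [hgen_zero, hgen_neg (by omega), hgen_neg (by omega), hgen_zero]
    ring
  · -- d ≥ 1
    obtain ⟨e, rfl⟩ : ∃ e : ℕ, d = ((e : ℤ) + 1) := ⟨(d-1).toNat, by omega⟩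
    have hd1 : (e : ℤ) + 1 - 1 = ((e : ℕ) : ℤ) := by ring
    have hd2 : (e : ℤ) + 1 - 2 = ((e : ℕ) : ℤ) - 1 := by ring
    have hdc : (e : ℤ) + 1 = (((e+1 : ℕ)) : ℤ) := by push_cast; ring
    rw [hd1, hd2, hdc, hgen_pred e s]
    cases s with
    | zero =>
      -- hgen (e+1) 1 = (1+X) hgen e 1 - X * ∑ + hgen (e+1) 0
      rw [hgen_r_nonpos (j := ((e+1 : ℕ) : ℤ)) (r := ((0:ℕ) : ℤ)) (by exact_mod_cast Nat.succ_ne_zero e) (by simp)]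
      rw [show (((0:ℕ) : ℤ)) + 1 = (1:ℤ) by norm_num]
      rw [hgen_one (e+1), hgen_one e]
      simp only [Nat.cast_zero, Nat.choose_zero_right, Nat.cast_one, one_mul, add_zero]
      cases e with
      | zero =>
        simp [Finset.sum_range_succ]
      | succ u =>
        rw [geom_step u]
    | succ σ =>
      set s := σ + 1 with hs
      rw [hgen_nat (e+1) s, hgen_nat e s]
      have hcast : ((s : ℕ) : ℤ) = ((σ : ℕ) : ℤ) + 1 := by push_cast [hs]; ring
      rw [hcast, hgen_nat (e+1) σ]
      -- X * T2 = SB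
      have claim1 : RatFunc.X * ∑ i ∈ range (e+1),
            ((s + i).choose s : RatFunc ℚ) * ((s + e - i).choose s : RatFunc ℚ) * RatFunc.X ^ i
          = ∑ i ∈ range (e+2),
            ((s + i - 1).choose s : RatFunc ℚ) * ((s + e + 1 - i).choose s : RatFunc ℚ) * RatFunc.X ^ i := by
        rw [Finset.sum_range_succ' (fun i => ((s + i - 1).choose s : RatFunc ℚ) * ((s + e + 1 - i).choose s : RatFunc ℚ) * RatFunc.X ^ i) (e+1)]
        rw [show s + 0 - 1 = σ by omega, Nat.choose_eq_zero_of_lt (by omega)]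
        rw [Finset.mul_sum]
        simp only [Nat.cast_zero, zero_mul, add_zero, pow_zero, mul_one]
        refine Finset.sum_congr rfl fun i hi => ?_
        rw [show s + (i+1) - 1 = s + i by omega, show s + e + 1 - (i+1) = s + e - i by omega]
        ring
      have claim2 : RatFunc.X * ∑ i ∈ range e,
            ((s + i).choose s : RatFunc ℚ) * ((s + e - 1 - i).choose s : RatFunc ℚ) * RatFunc.X ^ i
          = ∑ i ∈ range (e+1),
            ((s + i - 1).choose s : RatFunc ℚ) * ((s + e - i).choose s : RatFunc ℚ) * RatFunc.X ^ i := by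
        rw [Finset.sum_range_succ' (fun i => ((s + i - 1).choose s : RatFunc ℚ) * ((s + e - i).choose s : RatFunc ℚ) * RatFunc.X ^ i) e]
        rw [show s + 0 - 1 = σ by omega, Nat.choose_eq_zero_of_lt (by omega)]
        rw [Finset.mul_sum]
        simp only [Nat.cast_zero, zero_mul, add_zero, pow_zero, mul_one]
        refine Finset.sum_congr rfl fun i hi => ?_
        rw [show s + (i+1) - 1 = s + i by omega, show s + e - (i+1) = s + e - 1 - i by omega]
        ring
      rw [add_mul, one_mul, claim1, claim2]
      -- pad T2 and X*T3 to range (e+2)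
      have pad2 : ∑ i ∈ range (e+1),
            ((s + i).choose s : RatFunc ℚ) * ((s + e - i).choose s : RatFunc ℚ) * RatFunc.X ^ i
          = ∑ i ∈ range (e+2),
            ((s + i).choose s : RatFunc ℚ) * ((s + e - i).choose s : RatFunc ℚ) * RatFunc.X ^ i := by
        rw [Finset.sum_range_succ (n := e+1)]
        rw [show s + e - (e+1) = σ by omega, Nat.choose_eq_zero_of_lt (show σ < s by omega)]
        simp
      have pad3 : ∑ i ∈ range (e+1),
            ((s + i - 1).choose s : RatFunc ℚ) * ((s + e - i).choose s : RatFunc ℚ) * RatFunc.X ^ i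
          = ∑ i ∈ range (e+2),
            ((s + i - 1).choose s : RatFunc ℚ) * ((s + e - i).choose s : RatFunc ℚ) * RatFunc.X ^ i := by
        rw [Finset.sum_range_succ (n := e+1)]
        rw [show s + e - (e+1) = σ by omega, Nat.choose_eq_zero_of_lt (show σ < s by omega)]
        simp
      rw [pad2, pad3]
      rw [← Finset.sum_add_distrib, ← Finset.sum_sub_distrib, ← Finset.sum_add_distrib]
      refine Finset.sum_congr rfl fun i hi => ?_
      rw [Finset.mem_range] at hi
      obtain ⟨t, ht⟩ : ∃ t, i + t = e + 1 := ⟨e + 1 - i, by omega⟩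
      have e4 : s + i - 1 = σ + i := by omega
      have e1 : s + i = σ + i + 1 := by omega
      have e2 : s + (e+1) - i = σ + t + 1 := by omega
      have e2' : s + e + 1 - i = σ + t + 1 := by omega
      have e3 : s + e - i = σ + t := by omega
      have e5 : σ + (e+1) - i = σ + t := by omega
      rw [e4, e1, e2, e2', e3, e5, hs]
      have key := pascal_key σ i t
      have keyQ : ((σ+i+1).choose (σ+1) * ((σ+t+1).choose (σ+1)) : RatFunc ℚ)
          + ((σ+i).choose (σ+1) * ((σ+t).choose (σ+1)) : RatFunc ℚ)
          = ((σ+i+1).choose (σ+1) * ((σ+t).choose (σ+1)) : RatFunc ℚ)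
            + ((σ+i).choose (σ+1) * ((σ+t+1).choose (σ+1)) : RatFunc ℚ)
            + ((σ+i).choose σ * ((σ+t).choose σ) : RatFunc ℚ) := by
        exact_mod_cast congrArg (fun n => ((n : ℕ) : RatFunc ℚ)) key
      linear_combination (RatFunc.X : RatFunc ℚ)^i * keyQ


section Hess
variable {R : Type*} [CommRing R] (f : ℕ → ℕ → R)

lemma val_succAbove {k : ℕ} (j : Fin (k+1)) (b : Fin k) :
    ((j.succAbove b : Fin (k+1)) : ℕ) = if (b:ℕ) < (j:ℕ) then (b:ℕ) else (b:ℕ)+1 := by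
  rw [Fin.succAbove]
  split_ifs with h1 h2 h2
  · rfl
  · exact absurd (by simpa [Fin.lt_def] using h1) h2
  · exact absurd (by simpa [Fin.lt_def] using h2) h1
  · rfl

noncomputable def dd (k : ℕ) : R := Matrix.det (Matrix.of fun i j : Fin k => f i j)

lemma subdet (hf : ∀ i j, i + 2 ≤ j → f i j = 0) :
    ∀ (k j : ℕ), j ≤ k →
      Matrix.det (Matrix.of fun a b : Fin k => f a (if (b:ℕ) < j then (b:ℕ) else (b:ℕ)+1))
        = (∏ t ∈ Ico j k, f t (t+1)) * dd f j := by
  intro k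
  induction k with
  | zero => intro j hj; interval_cases j; simp [dd]
  | succ k ih =>
    intro j hj
    rcases Nat.lt_or_ge j (k+1) with hjk | hjk
    · -- j ≤ k : expand along last column
      have hjk' : j ≤ k := by omega
      rw [Matrix.det_succ_column _ (Fin.last k)]
      rw [Finset.sum_eq_single (Fin.last k)]
      · have hcol : (if ((Fin.last k : Fin (k+1)) : ℕ) < j then ((Fin.last k : Fin (k+1)) : ℕ) else ((Fin.last k : Fin (k+1)) : ℕ)+1) = k+1 := by
          simp only [Fin.val_last]
          rw [if_neg (by omega)]
        have hsub : ((Matrix.of fun a b : Fin (k+1) => f a (if (b:ℕ) < j then (b:ℕ) else (b:ℕ)+1)).submatrix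
              (Fin.last k).succAbove (Fin.last k).succAbove)
            = (Matrix.of fun a b : Fin k => f a (if (b:ℕ) < j then (b:ℕ) else (b:ℕ)+1)) := by
          ext a b
          simp only [Matrix.submatrix_apply, Fin.succAbove_last, Matrix.of_apply, Fin.coe_castSucc]
        rw [hsub, ih j hjk']
        simp only [Matrix.of_apply, Fin.val_last]
        rw [if_neg (by omega)]
        rw [Finset.prod_Ico_succ_top hjk']
        have hsign : (-1:R)^(k+k) = 1 := by
          rw [← two_mul, pow_mul]; norm_num
        rw [hsign]
        ring
      · intro i _ hi
        have hiv : (i : ℕ) + 2 ≤ k + 1 := by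
          have := Fin.lt_last_iff_ne_last.2 hi
          have : (i:ℕ) < k := this
          omega
        simp only [Matrix.of_apply, Fin.val_last]
        rw [if_neg (by omega), hf i (k+1) (by omega)]
        ring
      · intro h; exact absurd (Finset.mem_univ _) h
    · -- j = k+1
      have hj1 : j = k+1 := by omega
      subst hj1
      have : (Matrix.of fun a b : Fin (k+1) => f a (if (b:ℕ) < k+1 then (b:ℕ) else (b:ℕ)+1))
          = (Matrix.of fun a b : Fin (k+1) => f a b) := by
        ext a b
        simp only [Matrix.of_apply]
        rw [if_pos b.isLt]
      rw [this]
      simp [dd]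

lemma hess (hf : ∀ i j, i + 2 ≤ j → f i j = 0) (k : ℕ) :
    dd f (k+1) = ∑ j ∈ range (k+1),
      (-1 : R)^(k+j) * f k j * (∏ t ∈ Ico j k, f t (t+1)) * dd f j := by
  rw [dd, Matrix.det_succ_row _ (Fin.last k)]
  rw [← Fin.sum_univ_eq_sum_range (fun j => (-1 : R)^(k+j) * f k j * (∏ t ∈ Ico j k, f t (t+1)) * dd f j) (k+1)]
  refine Finset.sum_congr rfl fun j _ => ?_
  have hsub : ((Matrix.of fun i j : Fin (k+1) => f i j).submatrix (Fin.last k).succAbove j.succAbove)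
      = (Matrix.of fun a b : Fin k => f a (if (b:ℕ) < (j:ℕ) then (b:ℕ) else (b:ℕ)+1)) := by
    ext a b
    simp only [Matrix.submatrix_apply, Fin.succAbove_last, Matrix.of_apply, Fin.coe_castSucc]
    rw [val_succAbove]
  rw [hsub, subdet f hf k j (by omega)]
  simp only [Matrix.of_apply, Fin.val_last]
  ring


noncomputable def fD (D : ℕ) : ℕ → ℕ → RatFunc ℚ :=
  fun i j => hgen ((D:ℤ) + 2*j - i - 1) ((i:ℤ) - j + 2)

lemma fD_hess (D : ℕ) : ∀ i j, i + 2 ≤ j → fD D i j = 0 := by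
  intro i j hij
  rw [fD, hgen_r_nonpos]
  · have : (i:ℤ) + 2 ≤ (j:ℤ) := by exact_mod_cast hij
    omega
  · have : (i:ℤ) + 2 ≤ (j:ℤ) := by exact_mod_cast hij
    omega

lemma P_eq_dd (D k : ℕ) : P (D + k) k = dd (fD D) k := by
  rw [P, dd]
  congr 1
  ext i j
  rw [Matrix.of_apply, Matrix.of_apply, fD]
  congr 1
  push_cast
  ring

lemma P_zero (m : ℕ) : P m 0 = 1 := Matrix.det_fin_zero

lemma fD_super (D t : ℕ) : fD D t (t+1) = qint (D+t+2) := by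
  rw [fD]
  have h1 : (D:ℤ) + 2*(t+1:ℕ) - t - 1 = ((D+t+1 : ℕ) : ℤ) := by push_cast; ring
  have h2 : (t:ℤ) - (t+1:ℕ) + 2 = 1 := by push_cast; ring
  rw [h1, h2, hgen_one (D+t+1), qint_geom]

lemma P_rec (D K : ℕ) : P (D + (K+1)) (K+1) = ∑ j ∈ range (K+1),
    (-1 : RatFunc ℚ)^(K+j) * hgen ((D:ℤ) + 2*j - K - 1) ((K:ℤ) - j + 2)
      * (∏ t ∈ Ico j K, qint (D+t+2)) * P (D+j) j := by
  rw [P_eq_dd, hess (fD D) (fD_hess D) K]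
  refine Finset.sum_congr rfl fun j hj => ?_
  rw [P_eq_dd D j, Finset.prod_congr rfl fun t _ => fD_super D t]
  rw [fD]


noncomputable def Ff (m : ℕ) (x : RatFunc ℚ) : RatFunc ℚ :=
  ∑ s ∈ range (m+1), hgen ((m:ℤ) - 2*s) ((s:ℤ)+1)
    * (1-RatFunc.X)^(2*s) * x^s * (1-x)^(2*(m-s))

lemma Ff_zero (x : RatFunc ℚ) : Ff 0 x = 1 := by
  rw [Ff, Finset.sum_range_one]
  rw [show ((0:ℕ):ℤ) - 2*((0:ℕ):ℤ) = (0:ℤ) by norm_num]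
  rw [hgen_zero]
  norm_num

lemma Ff_one (x : RatFunc ℚ) : Ff 1 x = (1 + RatFunc.X) * (1-x)^2 := by
  rw [Ff, Finset.sum_range_succ, Finset.sum_range_one]
  rw [hgen_neg (j := ((1:ℕ):ℤ) - 2*((1:ℕ):ℤ)) (by norm_num)]
  rw [show ((1:ℕ):ℤ) - 2*((0:ℕ):ℤ) = ((1:ℕ):ℤ) by norm_num]
  rw [show ((0:ℕ):ℤ) + 1 = (1:ℤ) by norm_num]
  rw [hgen_one 1, Finset.sum_range_succ, Finset.sum_range_one]
  norm_num

lemma Ff_rec (M : ℕ) (x : RatFunc ℚ) :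
    Ff (M+2) x = (1+RatFunc.X)*(1-x)^2 * Ff (M+1) x
      - (1-RatFunc.X*x)*(RatFunc.X-x)*(1-x)^2 * Ff M x := by
  have hsplit : (1-RatFunc.X*x)*(RatFunc.X-x)*(1-x)^2 * Ff M x
      = RatFunc.X*(1-x)^2*(1-x)^2 * Ff M x - (1-RatFunc.X)^2*x*(1-x)^2 * Ff M x := by ring
  rw [hsplit]
  have S1 : (1+RatFunc.X)*(1-x)^2 * Ff (M+1) x = ∑ s ∈ range (M+3),
      (1+RatFunc.X) * hgen ((M:ℤ)+1-2*s) ((s:ℤ)+1) * (1-RatFunc.X)^(2*s) * x^s * (1-x)^(2*(M+2-s)) := by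
    rw [Finset.sum_range_succ (n := M+2)]
    rw [hgen_neg (j := (M:ℤ)+1-2*((M+2:ℕ):ℤ)) (by push_cast; omega)]
    simp only [mul_zero, zero_mul, add_zero]
    rw [Ff, Finset.mul_sum]
    refine Finset.sum_congr rfl fun s hs => ?_
    rw [Finset.mem_range] at hs
    rw [show ((M+1:ℕ):ℤ) - 2*(s:ℤ) = (M:ℤ)+1-2*(s:ℤ) by push_cast; ring]
    rw [show 2*(M+2-s) = 2*((M+1)-s) + 2 by omega, pow_add]
    ring
  have S2 : RatFunc.X*(1-x)^2*(1-x)^2 * Ff M x = ∑ s ∈ range (M+3),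
      RatFunc.X * hgen ((M:ℤ)-2*s) ((s:ℤ)+1) * (1-RatFunc.X)^(2*s) * x^s * (1-x)^(2*(M+2-s)) := by
    rw [Finset.sum_range_succ (n := M+2), Finset.sum_range_succ (n := M+1)]
    rw [hgen_neg (j := (M:ℤ)-2*((M+2:ℕ):ℤ)) (by push_cast; omega)]
    rw [hgen_neg (j := (M:ℤ)-2*((M+1:ℕ):ℤ)) (by push_cast; omega)]
    simp only [mul_zero, zero_mul, add_zero]
    rw [Ff, Finset.mul_sum]
    refine Finset.sum_congr rfl fun s hs => ?_
    rw [Finset.mem_range] at hs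
    rw [show 2*(M+2-s) = 2*(M-s) + 2 + 2 by omega, pow_add, pow_add]
    ring
  have S3 : (1-RatFunc.X)^2*x*(1-x)^2 * Ff M x = ∑ s ∈ range (M+3),
      hgen ((M:ℤ)+2-2*s) (s:ℤ) * (1-RatFunc.X)^(2*s) * x^s * (1-x)^(2*(M+2-s)) := by
    rw [Finset.sum_range_succ' (fun s => hgen ((M:ℤ)+2-2*(s:ℤ)) (s:ℤ) * (1-RatFunc.X)^(2*s) * x^s * (1-x)^(2*(M+2-s))) (M+2)]
    rw [hgen_r_nonpos (j := (M:ℤ)+2-2*((0:ℕ):ℤ)) (by omega) (by omega)]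
    rw [Finset.sum_range_succ (n := M+1)]
    rw [hgen_neg (j := (M:ℤ)+2-2*(((M+1)+1:ℕ):ℤ)) (by push_cast; omega)]
    simp only [mul_zero, zero_mul, add_zero, zero_add]
    rw [Ff, Finset.mul_sum]
    refine Finset.sum_congr rfl fun s hs => ?_
    rw [Finset.mem_range] at hs
    rw [show (M:ℤ)+2-2*(((s+1):ℕ):ℤ) = (M:ℤ)-2*(s:ℤ) by push_cast; ring]
    rw [show (((s+1):ℕ):ℤ) = (s:ℤ)+1 by push_cast; ring]
    rw [show 2*(M+2-(s+1)) = 2*(M-s)+2 by omega, pow_add]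
    rw [show 2*(s+1) = 2*s+2 by omega, pow_add]
    ring
  rw [S1, S2, S3]
  rw [← Finset.sum_sub_distrib, ← Finset.sum_sub_distrib]
  rw [Ff]
  refine Finset.sum_congr rfl fun s hs => ?_
  have h := hrec ((M:ℤ)+2-2*s) s
  rw [show (M:ℤ)+2-2*(s:ℤ)-1 = (M:ℤ)+1-2*(s:ℤ) by ring] at h
  rw [show (M:ℤ)+2-2*(s:ℤ)-2 = (M:ℤ)-2*(s:ℤ) by ring] at h
  rw [show ((M+2:ℕ):ℤ) - 2*(s:ℤ) = (M:ℤ)+2-2*(s:ℤ) by push_cast; ring]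
  linear_combination ((1-RatFunc.X)^(2*s) * x^s * (1-x)^(2*(M+2-s))) * h

lemma FI : ∀ (m : ℕ) (x : RatFunc ℚ),
    (1-x)^m * ((1 - RatFunc.X*x)^(m+1) - (RatFunc.X - x)^(m+1))
      = (1 - RatFunc.X)*(1+x)*Ff m x := by
  intro m
  induction m using Nat.strong_induction_on with
  | _ m ih =>
    match m with
    | 0 => intro x; rw [Ff_zero]; ring
    | 1 => intro x; rw [Ff_one]; ring
    | (M+2) =>
      intro x
      rw [Ff_rec]
      have h1 := ih (M+1) (by omega) x
      have h2 := ih M (by omega) x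
      linear_combination ((1+RatFunc.X)*(1-x)^2) * h1 - ((1-RatFunc.X*x)*(RatFunc.X-x)*(1-x)^2) * h2


lemma tri {β : Type*} [AddCommMonoid β] (m : ℕ) (g : ℕ → ℕ → β) :
    ∑ k ∈ range m, ∑ j ∈ range (m-k), g k j
      = ∑ p ∈ range m, ∑ k ∈ range (p+1), g k (p-k) := by
  induction m with
  | zero => simp
  | succ m ih =>
    have h1 : ∑ k ∈ range (m+1), ∑ j ∈ range (m+1-k), g k j
        = (∑ k ∈ range m, ∑ j ∈ range (m-k), g k j) + ∑ k ∈ range (m+1), g k (m-k) := by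
      rw [Finset.sum_range_succ (n := m)]
      have hlast : ∑ j ∈ range (m+1-m), g m j = g m 0 := by
        rw [show m+1-m = 1 by omega, Finset.sum_range_one]
      rw [hlast]
      have hmain : ∑ k ∈ range m, ∑ j ∈ range (m+1-k), g k j
          = ∑ k ∈ range m, ((∑ j ∈ range (m-k), g k j) + g k (m-k)) := by
        refine Finset.sum_congr rfl fun k hk => ?_
        rw [Finset.mem_range] at hk
        rw [show m+1-k = (m-k)+1 by omega, Finset.sum_range_succ]
      rw [hmain, Finset.sum_add_distrib]
      conv_rhs => rw [Finset.sum_range_succ (n := m)]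
      rw [Nat.sub_self]
      abel
    rw [h1, ih]
    conv_rhs => rw [Finset.sum_range_succ (n := m)]

lemma qfact_Ico (n : ℕ) : qfact n = ∏ t ∈ Ico 1 (n+1), qint t := by
  rw [qfact, Finset.Ico_add_one_right_eq_Icc]

lemma qfact_split {p m : ℕ} (h : p < m) :
    qfact (p+1) * (∏ t ∈ Ico (p+2) (m+1), qint t) = qfact m := by
  rw [qfact_Ico, qfact_Ico]
  rw [← Finset.prod_Ico_consecutive qint (show 1 ≤ p+2 by omega) (show p+2 ≤ m+1 by omega)]

lemma Ffsplit (m : ℕ) (x : RatFunc ℚ) :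
    Ff m x = qint (m+1) * (1-x)^(2*m)
      + ∑ p ∈ range m, hgen (2*(p:ℤ)-(m:ℤ)) ((m:ℤ)-(p:ℤ)+1)
          * (1-RatFunc.X)^(2*(m-p)) * x^(m-p) * (1-x)^(2*p) := by
  rw [Ff, Finset.sum_range_succ' _ m]
  have h0 : hgen ((m:ℤ) - 2*((0:ℕ):ℤ)) (((0:ℕ):ℤ)+1) * (1-RatFunc.X)^(2*0) * x^0 * (1-x)^(2*(m-0))
      = qint (m+1) * (1-x)^(2*m) := by
    rw [show (m:ℤ) - 2*((0:ℕ):ℤ) = ((m:ℕ):ℤ) by norm_num, show ((0:ℕ):ℤ)+1 = (1:ℤ) by norm_num]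
    rw [hgen_one m, ← qint_geom (m+1)]
    norm_num
  rw [h0, add_comm]
  congr 1
  rw [← Finset.sum_range_reflect]
  refine Finset.sum_congr rfl fun p hp => ?_
  rw [Finset.mem_range] at hp
  have e1 : m - 1 - p + 1 = m - p := by omega
  rw [e1]
  have hg : hgen ((m:ℤ) - 2*((m-p:ℕ):ℤ)) (((m-p:ℕ):ℤ)+1) = hgen (2*(p:ℤ)-(m:ℤ)) ((m:ℤ)-(p:ℤ)+1) := by
    have hc : ((m-p:ℕ):ℤ) = (m:ℤ) - (p:ℤ) := by
      have : p ≤ m := by omega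
      exact_mod_cast Int.ofNat_sub this
    rw [hc]
    congr 1
    ring
  rw [hg, show m - (m-p) = p by omega]

theorem PI : ∀ (m : ℕ) (x : RatFunc ℚ),
    ∑ k ∈ range (m+1), (-1 : RatFunc ℚ)^(m-k) * qfact k * P m (m-k)
        * (1-RatFunc.X)^(2*(m-k)) * x^(m-k) * (1-x)^k
        * ((1 - RatFunc.X*x)^(k+1) - (RatFunc.X - x)^(k+1))
      = (1+x)*(1-x)^(2*m)*(1-RatFunc.X)*qfact (m+1) := by
  intro m
  induction m using Nat.strong_induction_on with
  | _ m ih =>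
    intro x
    rw [Finset.sum_range_succ]
    have hlast : (-1 : RatFunc ℚ)^(m-m) * qfact m * P m (m-m)
        * (1-RatFunc.X)^(2*(m-m)) * x^(m-m) * (1-x)^m
        * ((1 - RatFunc.X*x)^(m+1) - (RatFunc.X - x)^(m+1))
        = qfact m * ((1-x)^m * ((1 - RatFunc.X*x)^(m+1) - (RatFunc.X - x)^(m+1))) := by
      rw [Nat.sub_self, P_zero]
      ring
    rw [hlast]
    -- rewrite the partial sum using P_rec
    have step2 : ∑ k ∈ range m, (-1 : RatFunc ℚ)^(m-k) * qfact k * P m (m-k)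
        * (1-RatFunc.X)^(2*(m-k)) * x^(m-k) * (1-x)^k
        * ((1 - RatFunc.X*x)^(k+1) - (RatFunc.X - x)^(k+1))
        = ∑ k ∈ range m, ∑ j ∈ range (m-k),
          (-1 : RatFunc ℚ)^(m-k) * qfact k
            * ((-1 : RatFunc ℚ)^((m-k-1)+j) * hgen ((k:ℤ) + 2*j - (m-k-1:ℕ) - 1) (((m-k-1:ℕ):ℤ) - j + 2)
                * (∏ t ∈ Ico j (m-k-1), qint (k+t+2)) * P (k+j) j)
            * (1-RatFunc.X)^(2*(m-k)) * x^(m-k) * (1-x)^k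
            * ((1 - RatFunc.X*x)^(k+1) - (RatFunc.X - x)^(k+1)) := by
      refine Finset.sum_congr rfl fun k hk => ?_
      rw [Finset.mem_range] at hk
      have hP : P m (m-k) = ∑ j ∈ range (m-k),
          (-1 : RatFunc ℚ)^((m-k-1)+j) * hgen ((k:ℤ) + 2*j - (m-k-1:ℕ) - 1) (((m-k-1:ℕ):ℤ) - j + 2)
            * (∏ t ∈ Ico j (m-k-1), qint (k+t+2)) * P (k+j) j := by
        have h1 : P m (m-k) = P (k + ((m-k-1)+1)) ((m-k-1)+1) := by
          congr 1 <;> omega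
        rw [h1, P_rec k (m-k-1)]
        rw [show (m-k-1)+1 = m-k by omega]
      rw [hP, Finset.mul_sum, Finset.sum_mul, Finset.sum_mul, Finset.sum_mul, Finset.sum_mul]
      all_goals exact Finset.sum_congr rfl fun j _ => by ring
    rw [step2, tri m _]
    have step4 : ∑ p ∈ range m, ∑ k ∈ range (p+1),
          (-1 : RatFunc ℚ)^(m-k) * qfact k
            * ((-1 : RatFunc ℚ)^((m-k-1)+(p-k)) * hgen ((k:ℤ) + 2*(((p-k:ℕ)):ℤ) - (m-k-1:ℕ) - 1) (((m-k-1:ℕ):ℤ) - (((p-k:ℕ)):ℤ) + 2)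
                * (∏ t ∈ Ico (p-k) (m-k-1), qint (k+t+2)) * P (k+(p-k)) (p-k))
            * (1-RatFunc.X)^(2*(m-k)) * x^(m-k) * (1-x)^k
            * ((1 - RatFunc.X*x)^(k+1) - (RatFunc.X - x)^(k+1))
        = ∑ p ∈ range m,
            (-(qfact m * (1-RatFunc.X) * (1+x)))
              * (hgen (2*(p:ℤ)-(m:ℤ)) ((m:ℤ)-(p:ℤ)+1)
                  * (1-RatFunc.X)^(2*(m-p)) * x^(m-p) * (1-x)^(2*p)) := by
      refine Finset.sum_congr rfl fun p hp => ?_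
      rw [Finset.mem_range] at hp
      have hin : ∑ k ∈ range (p+1),
          (-1 : RatFunc ℚ)^(m-k) * qfact k
            * ((-1 : RatFunc ℚ)^((m-k-1)+(p-k)) * hgen ((k:ℤ) + 2*(((p-k:ℕ)):ℤ) - (m-k-1:ℕ) - 1) (((m-k-1:ℕ):ℤ) - (((p-k:ℕ)):ℤ) + 2)
                * (∏ t ∈ Ico (p-k) (m-k-1), qint (k+t+2)) * P (k+(p-k)) (p-k))
            * (1-RatFunc.X)^(2*(m-k)) * x^(m-k) * (1-x)^k
            * ((1 - RatFunc.X*x)^(k+1) - (RatFunc.X - x)^(k+1))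
          = ∑ k ∈ range (p+1),
            (-(hgen (2*(p:ℤ)-(m:ℤ)) ((m:ℤ)-(p:ℤ)+1)
                * (∏ t ∈ Ico (p+2) (m+1), qint t)
                * (1-RatFunc.X)^(2*(m-p)) * x^(m-p)))
              * ((-1 : RatFunc ℚ)^(p-k) * qfact k * P p (p-k)
                  * (1-RatFunc.X)^(2*(p-k)) * x^(p-k) * (1-x)^k
                  * ((1 - RatFunc.X*x)^(k+1) - (RatFunc.X - x)^(k+1))) := by
        refine Finset.sum_congr rfl fun k hk => ?_
        rw [Finset.mem_range] at hk
        obtain ⟨d, hd⟩ : ∃ d, p - k = d ∧ k + d = p := ⟨p-k, rfl, by omega⟩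
        obtain ⟨hd1, hd2⟩ := hd
        obtain ⟨e, he⟩ : ∃ e, m - p - 1 = e ∧ p + 1 + e = m := ⟨m-p-1, rfl, by omega⟩
        obtain ⟨he1, he2⟩ := he
        rw [hd1, show m-k-1 = d+e from by omega, show m-k = d+e+1 from by omega,
          show m-p = e+1 from by omega, hd2]
        have hprod : ∏ t ∈ Ico d (d+e), qint (k+t+2) = ∏ t ∈ Ico (p+2) (m+1), qint t := by
          have := Finset.prod_Ico_add qint d (d+e) (k+2)
          have h2 : ∏ t ∈ Ico d (d+e), qint (k+t+2) = ∏ t ∈ Ico d (d+e), qint ((k+2)+t) :=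
            Finset.prod_congr rfl fun t _ => congrArg qint (by omega)
          rw [h2, this, show d+(k+2) = p+2 from by omega, show (d+e)+(k+2) = m+1 from by omega]
        rw [hprod]
        have hg : hgen ((k:ℤ) + 2*((d:ℕ):ℤ) - ((d+e:ℕ):ℤ) - 1) (((d+e:ℕ):ℤ) - ((d:ℕ):ℤ) + 2)
            = hgen (2*(p:ℤ)-(m:ℤ)) ((m:ℤ)-(p:ℤ)+1) := by
          have hp' : (p:ℤ) = (k:ℤ) + (d:ℤ) := by exact_mod_cast hd2.symm
          have hm' : (m:ℤ) = (p:ℤ) + 1 + (e:ℤ) := by exact_mod_cast he2.symm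
          congr 1 <;> (push_cast; omega)
        rw [hg]
        have hs : ((-1 : RatFunc ℚ))^(d+e+1) * ((-1 : RatFunc ℚ))^((d+e)+d) = -((-1 : RatFunc ℚ))^d := by
          rw [← pow_add, show (d+e+1)+((d+e)+d) = 2*(d+e)+(d+1) from by ring, pow_add,
            Even.neg_one_pow ⟨d+e, by ring⟩, one_mul, pow_succ]
          ring
        linear_combination (qfact k * (hgen (2*(p:ℤ)-(m:ℤ)) ((m:ℤ)-(p:ℤ)+1)
            * (∏ t ∈ Ico (p+2) (m+1), qint t) * P p d)
            * (1-RatFunc.X)^(2*(d+e+1)) * x^(d+e+1) * (1-x)^k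
            * ((1 - RatFunc.X*x)^(k+1) - (RatFunc.X - x)^(k+1))) * hs
      rw [hin, ← Finset.mul_sum, ih p hp x]
      have hqf := qfact_split hp
      linear_combination (-(hgen (2*(p:ℤ)-(m:ℤ)) ((m:ℤ)-(p:ℤ)+1)
          * (1-RatFunc.X)^(2*(m-p)) * x^(m-p)) * ((1+x)*(1-x)^(2*p)*(1-RatFunc.X))) * hqf
    rw [step4, ← Finset.mul_sum]
    have hFf := Ffsplit m x
    have hFI := FI m x
    have hqf : qfact (m+1) = qfact m * qint (m+1) := by
      rw [qfact, qfact, Finset.prod_Icc_succ_top (by omega)]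
    linear_combination (qfact m) * hFI + (qfact m*(1-RatFunc.X)*(1+x)) * hFf
      - ((1+x)*(1-x)^(2*m)*(1-RatFunc.X)) * hqf


lemma qint_zero : qint 0 = 0 := by
  rw [qint]
  norm_num

lemma S_step (m n : ℕ) : S (2*m+1) (n+1)
    = RatFunc.X^(m+1) * S (2*m+1) n + qint (2*(n+1)) / qint 2 * qint (n+1) ^ (2*m) := by
  rw [S, S, Finset.sum_Icc_succ_top (by omega : 1 ≤ n+1), Finset.mul_sum]
  have h2 : (2*m+1+1)/2 = m+1 := by omega
  congr 1
  · refine Finset.sum_congr rfl fun k hk => ?_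
    rw [Finset.mem_Icc] at hk
    rw [h2, show n+1-k = (n-k)+1 from by omega, Nat.mul_succ, pow_add]
    ring
  · rw [h2, Nat.sub_self, Nat.mul_zero, pow_zero, show 2*m+1-1 = 2*m from by omega]
    ring

noncomputable def Rh (m n : ℕ) : RatFunc ℚ :=
  ∑ k ∈ range (m + 1),
    (-1 : RatFunc ℚ) ^ (m - k) * (qfact k / qfact (m + 1)) * P m (m - k) *
      RatFunc.X ^ ((m - k) * n) * ((qint n * qint (n + 1)) ^ (k + 1) / qint 2)

lemma Rh_zero (m : ℕ) : Rh m 0 = 0 := by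
  rw [Rh]
  refine Finset.sum_eq_zero fun k _ => ?_
  rw [qint_zero]
  simp

lemma Rh_step (m n : ℕ) : Rh m (n+1)
    = RatFunc.X^(m+1) * Rh m n + qint (2*(n+1)) / qint 2 * qint (n+1) ^ (2*m) := by
  have hq2 : qint 2 ≠ 0 := qint_ne_zero (by omega)
  have hqf : qfact (m+1) ≠ 0 := qfact_ne_zero (m+1)
  have hC : qint 2 * qfact (m+1) ≠ 0 := mul_ne_zero hq2 hqf
  have hpow : ((1-RatFunc.X : RatFunc ℚ))^(2*m+2) ≠ 0 := pow_ne_zero _ one_sub_X_ne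
  have qa : qint (n+1) * (1 - RatFunc.X) = 1 - RatFunc.X^(n+1) := qint_mul (n+1)
  have qb : qint (n+1+1) * (1 - RatFunc.X) = 1 - RatFunc.X * RatFunc.X^(n+1) := by
    rw [qint_mul (n+1+1), pow_succ]
    ring
  have qc : qint n * (1 - RatFunc.X) * RatFunc.X = RatFunc.X - RatFunc.X^(n+1) := by
    rw [qint_mul n, pow_succ]
    ring
  have qd : qint (2*(n+1)) * (1 - RatFunc.X) = 1 - (RatFunc.X^(n+1))^2 := by
    rw [qint_mul (2*(n+1)), ← pow_mul, show (n+1)*2 = 2*(n+1) from by ring]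
  have e1 : qint (n+1) * qint (n+1+1) * ((1-RatFunc.X)^2)
      = (1 - RatFunc.X^(n+1)) * (1 - RatFunc.X * RatFunc.X^(n+1)) := by
    linear_combination (qint (n+1+1) * (1-RatFunc.X)) * qa + (1 - RatFunc.X^(n+1)) * qb
  have e2 : qint n * qint (n+1) * ((1-RatFunc.X)^2 * RatFunc.X)
      = (RatFunc.X - RatFunc.X^(n+1)) * (1 - RatFunc.X^(n+1)) := by
    linear_combination (qint (n+1) * (1-RatFunc.X)) * qc + (RatFunc.X - RatFunc.X^(n+1)) * qa
  -- key termwise identity (division free)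
  have key : ∀ k ∈ range (m+1),
      ((-1 : RatFunc ℚ)^(m-k) * qfact k * P m (m-k)
          * RatFunc.X^((m-k)*(n+1)) * (qint (n+1) * qint (n+1+1))^(k+1)
        - RatFunc.X^(m+1) * ((-1 : RatFunc ℚ)^(m-k) * qfact k * P m (m-k)
          * RatFunc.X^((m-k)*n) * (qint n * qint (n+1))^(k+1))) * (1-RatFunc.X)^(2*m+2)
      = (1 - RatFunc.X^(n+1)) *
          ((-1 : RatFunc ℚ)^(m-k) * qfact k * P m (m-k)
            * (1-RatFunc.X)^(2*(m-k)) * (RatFunc.X^(n+1))^(m-k) * (1-RatFunc.X^(n+1))^k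
            * ((1 - RatFunc.X*RatFunc.X^(n+1))^(k+1) - (RatFunc.X - RatFunc.X^(n+1))^(k+1))) := by
    intro k hk
    rw [Finset.mem_range] at hk
    have e1k := congrArg (fun z : RatFunc ℚ => z^(k+1)) e1
    have e2k := congrArg (fun z : RatFunc ℚ => z^(k+1)) e2
    rw [mul_pow (qint (n+1) * qint (n+1+1)) ((1-RatFunc.X)^2),
      mul_pow (1 - RatFunc.X^(n+1)) (1 - RatFunc.X*RatFunc.X^(n+1))] at e1k
    rw [mul_pow (qint n * qint (n+1)) ((1-RatFunc.X)^2 * RatFunc.X),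
      mul_pow ((1-RatFunc.X)^2) RatFunc.X,
      mul_pow (RatFunc.X - RatFunc.X^(n+1)) (1 - RatFunc.X^(n+1))] at e2k
    have hp1 : (1-RatFunc.X : RatFunc ℚ)^(2*m+2) = ((1-RatFunc.X)^2)^(k+1) * (1-RatFunc.X)^(2*(m-k)) := by
      rw [← pow_mul, ← pow_add]
      congr 1
      omega
    have hp2 : (RatFunc.X : RatFunc ℚ)^(m+1) = RatFunc.X^(m-k) * RatFunc.X^(k+1) := by
      rw [← pow_add]
      congr 1
      omega
    have hx1 : (RatFunc.X : RatFunc ℚ)^((m-k)*(n+1)) = (RatFunc.X^(n+1))^(m-k) := by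
      rw [← pow_mul, Nat.mul_comm]
    have hx2 : (RatFunc.X : RatFunc ℚ)^(m-k) * RatFunc.X^((m-k)*n) = (RatFunc.X^(n+1))^(m-k) := by
      rw [← pow_mul, ← pow_add]
      congr 1
      ring
    rw [hp1, hp2, hx1]
    linear_combination ((-1 : RatFunc ℚ)^(m-k) * qfact k * P m (m-k)
        * (RatFunc.X^(n+1))^(m-k) * (1-RatFunc.X)^(2*(m-k))) * e1k
      - ((-1 : RatFunc ℚ)^(m-k) * qfact k * P m (m-k)
        * RatFunc.X^(m-k) * RatFunc.X^((m-k)*n) * (1-RatFunc.X)^(2*(m-k))) * e2k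
      - ((-1 : RatFunc ℚ)^(m-k) * qfact k * P m (m-k) * (1-RatFunc.X)^(2*(m-k))
          * ((RatFunc.X - RatFunc.X^(n+1))^(k+1) * (1 - RatFunc.X^(n+1))^(k+1))) * hx2
  -- convert Rh sums to division free form
  have hconv : ∀ n' : ℕ, Rh m n' = (qint 2 * qfact (m+1))⁻¹ *
      ∑ k ∈ range (m+1), (-1 : RatFunc ℚ)^(m-k) * qfact k * P m (m-k)
        * RatFunc.X^((m-k)*n') * (qint n' * qint (n'+1))^(k+1) := by
    intro n'
    rw [Rh, Finset.mul_sum]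
    exact Finset.sum_congr rfl fun k _ => by ring
  rw [hconv (n+1), hconv n]
  rw [inv_mul_eq_iff_eq_mul₀ hC]
  have hsum : (∑ k ∈ range (m+1), (-1 : RatFunc ℚ)^(m-k) * qfact k * P m (m-k)
        * RatFunc.X^((m-k)*(n+1)) * (qint (n+1) * qint (n+1+1))^(k+1)) * (1-RatFunc.X)^(2*m+2)
      = RatFunc.X^(m+1) * ((∑ k ∈ range (m+1), (-1 : RatFunc ℚ)^(m-k) * qfact k * P m (m-k)
          * RatFunc.X^((m-k)*n) * (qint n * qint (n+1))^(k+1)) * (1-RatFunc.X)^(2*m+2))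
        + (1 - RatFunc.X^(n+1)) *
          ((1+RatFunc.X^(n+1))*(1-RatFunc.X^(n+1))^(2*m)*(1-RatFunc.X)*qfact (m+1)) := by
    calc (∑ k ∈ range (m+1), (-1 : RatFunc ℚ)^(m-k) * qfact k * P m (m-k)
        * RatFunc.X^((m-k)*(n+1)) * (qint (n+1) * qint (n+1+1))^(k+1)) * (1-RatFunc.X)^(2*m+2)
        = ∑ k ∈ range (m+1),
            (RatFunc.X^(m+1) * (((-1 : RatFunc ℚ)^(m-k) * qfact k * P m (m-k)
              * RatFunc.X^((m-k)*n) * (qint n * qint (n+1))^(k+1)) * (1-RatFunc.X)^(2*m+2))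
            + (1 - RatFunc.X^(n+1)) *
              ((-1 : RatFunc ℚ)^(m-k) * qfact k * P m (m-k)
                * (1-RatFunc.X)^(2*(m-k)) * (RatFunc.X^(n+1))^(m-k) * (1-RatFunc.X^(n+1))^k
                * ((1 - RatFunc.X*RatFunc.X^(n+1))^(k+1) - (RatFunc.X - RatFunc.X^(n+1))^(k+1)))) := by
          rw [Finset.sum_mul]
          exact Finset.sum_congr rfl fun k hk => by linear_combination key k hk
      _ = RatFunc.X^(m+1) * ((∑ k ∈ range (m+1), (-1 : RatFunc ℚ)^(m-k) * qfact k * P m (m-k)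
            * RatFunc.X^((m-k)*n) * (qint n * qint (n+1))^(k+1)) * (1-RatFunc.X)^(2*m+2))
          + (1 - RatFunc.X^(n+1)) * ∑ k ∈ range (m+1),
              (-1 : RatFunc ℚ)^(m-k) * qfact k * P m (m-k)
                * (1-RatFunc.X)^(2*(m-k)) * (RatFunc.X^(n+1))^(m-k) * (1-RatFunc.X^(n+1))^k
                * ((1 - RatFunc.X*RatFunc.X^(n+1))^(k+1) - (RatFunc.X - RatFunc.X^(n+1))^(k+1)) := by
          rw [Finset.sum_add_distrib, ← Finset.mul_sum, ← Finset.mul_sum, ← Finset.sum_mul]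
      _ = RatFunc.X^(m+1) * ((∑ k ∈ range (m+1), (-1 : RatFunc ℚ)^(m-k) * qfact k * P m (m-k)
            * RatFunc.X^((m-k)*n) * (qint n * qint (n+1))^(k+1)) * (1-RatFunc.X)^(2*m+2))
          + (1 - RatFunc.X^(n+1)) *
            ((1+RatFunc.X^(n+1))*(1-RatFunc.X^(n+1))^(2*m)*(1-RatFunc.X)*qfact (m+1)) := by
          rw [PI m (RatFunc.X^(n+1))]
  apply mul_right_cancel₀ hpow
  rw [hsum]
  have hCC : (qint 2 * qfact (m+1)) * (qint 2 * qfact (m+1))⁻¹ = 1 := mul_inv_cancel₀ hC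
  have hc2 : qint 2 * (qint 2)⁻¹ = 1 := mul_inv_cancel₀ hq2
  have hq : (qint (n+1))^(2*m) * ((1-RatFunc.X))^(2*m) = (1 - RatFunc.X^(n+1))^(2*m) := by
    rw [← mul_pow, qa]
  rw [div_eq_mul_inv]
  linear_combination (-(RatFunc.X^(m+1) * (∑ k ∈ range (m+1), (-1 : RatFunc ℚ)^(m-k) * qfact k * P m (m-k)
        * RatFunc.X^((m-k)*n) * (qint n * qint (n+1))^(k+1)) * (1-RatFunc.X)^(2*m+2))) * hCC
    + (-(qfact (m+1) * qint (2*(n+1)) * (qint (n+1))^(2*m) * (1-RatFunc.X)^(2*m+2))) * hc2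
    + (-(qfact (m+1) * (qint (n+1))^(2*m) * (1-RatFunc.X)^(2*m+1))) * qd
    + (-(qfact (m+1) * (1 - (RatFunc.X^(n+1))^2) * (1-RatFunc.X))) * hq

/-- Guo and Zeng's `q`-Faulhaber formula, with `P_{m,k}` given by the determinant. -/
theorem stmt11 (m n : ℕ) (hn : 1 ≤ n) :
    S (2 * m + 1) n =
      ∑ k ∈ range (m + 1),
        (-1 : RatFunc ℚ) ^ (m - k) * (qfact k / qfact (m + 1)) * P m (m - k) *
          RatFunc.X ^ ((m - k) * n) * ((qint n * qint (n + 1)) ^ (k + 1) / qint 2) := by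
  have h : ∀ n' : ℕ, S (2*m+1) n' = Rh m n' := by
    intro n'
    induction n' with
    | zero =>
      rw [Rh_zero, S, Finset.Icc_eq_empty (by omega), Finset.sum_empty]
    | succ n' ih =>
      rw [S_step, Rh_step, ih]
  rw [show 2*m+1 = 2*m+1 from rfl] at h
  rw [h n, Rh]
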